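/- Let n ≥ 1, N = {1, 2, …, n}, let A be a nonempty subset of N, and let C, C′ be nonempty subsets of N. Then Σ_{B} (−1)^{|B|} = (−1)^{n−|A|} · ( 1_{C∪C′=A} − 1_{C=A} − 1_{C′=A} ), where the sum ranges over all subsets B of N with N∖A ⊆ B ⊆ N, B ∩ C ≠ ∅ and B ∩ C′ ≠ ∅, and 1_{P} equals 1 if the condition P holds and 0 otherwise. -/
import Mathlib

open Finset

lemma key_alt_sum (n : ℕ) (A E : Finset (Fin n)) :
    ∑ B ∈ Finset.univ.powerset.filter
        (fun B => Finset.univ \ A ⊆ B ∧ B ∩ E = ∅),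
      (-1 : ℤ) ^ B.card
    = (-1 : ℤ) ^ (n - A.card) * (if E = A then 1 else 0) := by
  classical
  by_cases hE : E ⊆ A
  · have hcard : (Finset.univ \ A : Finset (Fin n)).card = n - A.card := by
      rw [Finset.card_sdiff_of_subset (Finset.subset_univ A), Finset.card_univ, Fintype.card_fin]
    have h1 : ∑ B ∈ Finset.univ.powerset.filter
        (fun B => Finset.univ \ A ⊆ B ∧ B ∩ E = ∅), (-1 : ℤ) ^ B.card
        = ∑ S ∈ (A \ E).powerset, (-1 : ℤ) ^ (S.card + (n - A.card)) := by
      apply Finset.sum_nbij' (fun B => B \ (Finset.univ \ A))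
        (fun S => S ∪ (Finset.univ \ A))
      · intro B hB
        simp only [Finset.mem_filter, Finset.mem_powerset] at hB ⊢
        obtain ⟨-, h1, h2⟩ := hB
        intro x hx
        simp only [Finset.mem_sdiff, Finset.mem_univ, true_and, not_not] at hx ⊢
        refine ⟨by tauto, fun hxE => ?_⟩
        have : x ∈ B ∩ E := Finset.mem_inter.2 ⟨hx.1, hxE⟩
        simp [h2] at this
      · intro S hS
        simp only [Finset.mem_powerset] at hS
        simp only [Finset.mem_filter, Finset.mem_powerset]
        refine ⟨Finset.subset_univ _, Finset.subset_union_right, ?_⟩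
        ext x
        simp only [Finset.mem_inter, Finset.mem_union, Finset.mem_sdiff, Finset.mem_univ,
          true_and, Finset.notMem_empty, iff_false, not_and]
        rintro (hxS | hxA) hxE
        · exact (Finset.mem_sdiff.1 (hS hxS)).2 hxE
        · exact hxA (hE hxE)
      · intro B hB
        simp only [Finset.mem_filter, Finset.mem_powerset] at hB
        exact Finset.sdiff_union_of_subset hB.2.1
      · intro S hS
        simp only [Finset.mem_powerset] at hS
        have hdisj : Disjoint S (Finset.univ \ A) := by
          refine Finset.disjoint_left.2 fun x hxS hxD => ?_
          exact (Finset.mem_sdiff.1 hxD).2 (Finset.mem_sdiff.1 (hS hxS)).1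
        rw [Finset.union_sdiff_cancel_right hdisj]
      · intro B hB
        simp only [Finset.mem_filter, Finset.mem_powerset] at hB
        rw [Finset.card_sdiff_of_subset hB.2.1, hcard]
        congr 1
        have hle : (Finset.univ \ A : Finset (Fin n)).card ≤ B.card :=
          Finset.card_le_card hB.2.1
        omega
    rw [h1]
    have h2 : ∀ S ∈ (A \ E).powerset, (-1 : ℤ) ^ (S.card + (n - A.card))
        = (-1 : ℤ) ^ (n - A.card) * (-1 : ℤ) ^ S.card := by
      intro S _; rw [pow_add]; ring
    rw [Finset.sum_congr rfl h2, ← Finset.mul_sum,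
      Finset.sum_powerset_neg_one_pow_card]
    congr 1
    have : A \ E = ∅ ↔ E = A := by
      rw [Finset.sdiff_eq_empty_iff_subset]
      constructor
      · intro h; exact Finset.Subset.antisymm hE h
      · intro h; rw [h]
    simp [this]
  · have hempty : Finset.univ.powerset.filter
        (fun B => Finset.univ \ A ⊆ B ∧ B ∩ E = ∅) = ∅ := by
      rw [Finset.filter_eq_empty_iff]
      rintro B - ⟨h1, h2⟩
      apply hE
      intro x hxE
      by_contra hxA
      have hxB : x ∈ B := h1 (by simp [hxA])
      have : x ∈ B ∩ E := Finset.mem_inter.2 ⟨hxB, hxE⟩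
      simp [h2] at this
    rw [hempty]
    have : ¬ E = A := fun h => hE (h ▸ Finset.Subset.refl A)
    simp [this]

/-- The inclusion–exclusion computation in the proof of Lemma 4.1(b):
`Σ_{N∖A ⊆ B ⊆ N, B∩C ≠ ∅, B∩C′ ≠ ∅} (−1)^{|B|}
= (−1)^{n−|A|} (1_{C∪C′=A} − 1_{C=A} − 1_{C′=A})`. -/
theorem alt_sum_double_hit (n : ℕ) (hn : 1 ≤ n) (A C C' : Finset (Fin n))
    (hA : A.Nonempty) (hC : C.Nonempty) (hC' : C'.Nonempty) :
    ∑ B ∈ Finset.univ.powerset.filter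
        (fun B => Finset.univ \ A ⊆ B ∧ (B ∩ C).Nonempty ∧ (B ∩ C').Nonempty),
      (-1 : ℤ) ^ B.card
    = (-1 : ℤ) ^ (n - A.card) *
        ((if C ∪ C' = A then 1 else 0) - (if C = A then 1 else 0)
          - (if C' = A then 1 else 0)) := by
  classical
  have key := key_alt_sum n A
  have hsplit : ∑ B ∈ Finset.univ.powerset.filter
        (fun B => Finset.univ \ A ⊆ B ∧ (B ∩ C).Nonempty ∧ (B ∩ C').Nonempty),
      (-1 : ℤ) ^ B.card
      = (∑ B ∈ Finset.univ.powerset.filter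
          (fun B => Finset.univ \ A ⊆ B ∧ B ∩ (C ∪ C') = ∅), (-1 : ℤ) ^ B.card)
        - (∑ B ∈ Finset.univ.powerset.filter
          (fun B => Finset.univ \ A ⊆ B ∧ B ∩ C = ∅), (-1 : ℤ) ^ B.card)
        - (∑ B ∈ Finset.univ.powerset.filter
          (fun B => Finset.univ \ A ⊆ B ∧ B ∩ C' = ∅), (-1 : ℤ) ^ B.card)
        + (∑ B ∈ Finset.univ.powerset.filter
          (fun B => Finset.univ \ A ⊆ B ∧ B ∩ (∅ : Finset (Fin n)) = ∅),
            (-1 : ℤ) ^ B.card) := by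
    simp only [Finset.sum_filter]
    rw [← Finset.sum_sub_distrib, ← Finset.sum_sub_distrib, ← Finset.sum_add_distrib]
    apply Finset.sum_congr rfl
    intro B hB
    by_cases hP : Finset.univ \ A ⊆ B
    · have hunion : B ∩ (C ∪ C') = (B ∩ C) ∪ (B ∩ C') := Finset.inter_union_distrib_left B C C'
      by_cases h1 : B ∩ C = ∅ <;> by_cases h2 : B ∩ C' = ∅ <;>
        simp [hP, h1, h2, hunion, Finset.nonempty_iff_ne_empty, Finset.union_eq_empty]
    · simp [hP]
  rw [hsplit, key (C ∪ C'), key C, key C', key ∅]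
  have hAne : ¬ (∅ : Finset (Fin n)) = A := fun h => by
    exact Finset.not_nonempty_empty (h ▸ hA)
  simp only [hAne, if_false]
  ring
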